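/- Let f be holomorphic on the upper half-plane ℂ₊ = {z : Im z > 0} with ∫_{ℂ₊} |f(z)| e^{−Im z} dλ(z) < +∞. Then there is a constant C (depending on f) such that for all z ∈ ℂ₊: ln|f(z)| ≤ Im z + 2 ln(1/Im z) + C. -/

import Mathlib

open MeasureTheory
open Metric Real Set

-- step 1: circle mean value inequality
lemma circle_step {g : ℂ → ℂ} {z : ℂ} {s : ℝ} (hs : 0 < s)
    (hg : DifferentiableOn ℂ g (closedBall z s)) :
    2 * π * ‖g z‖ ≤ ∫ θ in (0:ℝ)..(2*π), ‖g (circleMap z s θ)‖ := by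
  have h1 := hg.circleIntegral_sub_inv_smul (Metric.mem_ball_self hs)
  have h2 : ‖(2 * ↑π * Complex.I) • g z‖ = 2 * π * ‖g z‖ := by
    simp [norm_smul, Complex.norm_def, abs_of_pos Real.pi_pos]
  calc 2 * π * ‖g z‖ = ‖∮ w in C(z, s), (w - z)⁻¹ • g w‖ := by rw [h1, h2]
    _ ≤ ∫ θ in (0:ℝ)..(2*π), ‖deriv (circleMap z s) θ •
          ((circleMap z s θ - z)⁻¹ • g (circleMap z s θ))‖ :=
        intervalIntegral.norm_integral_le_integral_norm Real.two_pi_pos.le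
    _ = ∫ θ in (0:ℝ)..(2*π), ‖g (circleMap z s θ)‖ := by
        refine intervalIntegral.integral_congr fun θ _ => ?_
        rw [deriv_circleMap, norm_smul, norm_smul, norm_inv]
        have : ‖circleMap 0 s θ * Complex.I‖ = s := by
          simp [abs_of_pos hs]
        have h3 : ‖circleMap z s θ - z‖ = s := by
          simp [circleMap_sub_center, abs_of_pos hs]
        rw [this, h3]
        field_simp

lemma ball_mean_bound {g : ℂ → ℂ} {z : ℂ} {r : ℝ} (hr : 0 < r)
    (hg : DifferentiableOn ℂ g (closedBall z r)) :
    π * r^2 * ‖g z‖ ≤ ∫ w in ball z r, ‖g w‖ := by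
  set P : ℝ × ℝ → ℝ := fun p => p.1 * ‖g (circleMap z p.1 p.2)‖ with hP
  -- continuity facts
  have hgc : ContinuousOn (fun w => ‖g w‖) (closedBall z r) := hg.continuousOn.norm
  have hcm : Continuous (fun p : ℝ × ℝ => circleMap z p.1 p.2) := by
    unfold circleMap; fun_prop
  have hmaps : Set.MapsTo (fun p : ℝ × ℝ => circleMap z p.1 p.2)
      (Icc 0 r ×ˢ Icc (-π) π) (closedBall z r) := by
    rintro ⟨s, θ⟩ ⟨hs, -⟩
    simp only [mem_closedBall]
    rw [dist_eq_norm]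
    have : circleMap z s θ - z = circleMap 0 s θ := circleMap_sub_center z s θ
    rw [this]
    simp only [norm_circleMap_zero]
    rw [abs_of_nonneg hs.1]
    exact hs.2
  have hPc : ContinuousOn P (Icc 0 r ×ˢ Icc (-π) π) :=
    continuous_fst.continuousOn.mul (hgc.comp hcm.continuousOn hmaps)
  have hPint : IntegrableOn P (Ioo 0 r ×ˢ Ioo (-π) π) :=
    (hPc.integrableOn_compact (isCompact_Icc.prod isCompact_Icc)).mono_set
      (Set.prod_mono Ioo_subset_Icc_self Ioo_subset_Icc_self)
  -- the polar-coordinates identity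
  have hsymm_circ : ∀ p : ℝ × ℝ, z + Complex.polarCoord.symm p = circleMap z p.1 p.2 := by
    intro p
    rw [Complex.polarCoord_symm_apply]
    simp [circleMap, Complex.exp_mul_I]
  have hsc : Continuous (fun p : ℝ × ℝ => Complex.polarCoord.symm p) := by
    simp only [Complex.polarCoord_symm_apply]
    fun_prop
  have Epolar : ∫ w in ball z r, ‖g w‖ = ∫ p in Ioo 0 r ×ˢ Ioo (-π) π, P p := by
    set T : Set (ℝ × ℝ) := (fun p : ℝ × ℝ => Complex.polarCoord.symm p) ⁻¹' ball (0:ℂ) r with hT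
    have h1 : ∫ w in ball z r, ‖g w‖ = ∫ w in ball (0:ℂ) r, ‖g (z + w)‖ := by
      rw [← integral_indicator measurableSet_ball, ← integral_indicator measurableSet_ball,
        ← integral_add_left_eq_self (fun w => Set.indicator (ball z r) (fun w => ‖g w‖) w) z]
      refine integral_congr_ae (Filter.Eventually.of_forall fun w => ?_)
      by_cases hw : w ∈ ball (0:ℂ) r
      · have hw' : z + w ∈ ball z r := by
          simpa [mem_ball, dist_eq_norm] using mem_ball_zero_iff.1 hw
        simp only []
        rw [Set.indicator_of_mem hw', Set.indicator_of_mem hw]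
      · have hw' : z + w ∉ ball z r := by
          intro h; apply hw
          simpa [mem_ball, dist_eq_norm] using h
        simp only []
        rw [Set.indicator_of_notMem hw', Set.indicator_of_notMem hw]
    have h2 := Complex.integral_comp_polarCoord_symm
      (fun w => Set.indicator (ball (0:ℂ) r) (fun w => ‖g (z + w)‖) w)
    rw [integral_indicator measurableSet_ball] at h2
    rw [h1, ← h2]
    have h3 : ∀ p : ℝ × ℝ, p.1 • Set.indicator (ball (0:ℂ) r) (fun w => ‖g (z + w)‖)
        (Complex.polarCoord.symm p)
        = Set.indicator T
            (fun p : ℝ × ℝ => p.1 * ‖g (z + Complex.polarCoord.symm p)‖) p := by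
      intro p
      by_cases hp : Complex.polarCoord.symm p ∈ ball (0:ℂ) r
      · rw [Set.indicator_of_mem hp, Set.indicator_of_mem (by exact hp), smul_eq_mul]
      · rw [Set.indicator_of_notMem hp, Set.indicator_of_notMem (by exact hp), smul_zero]
    simp only [h3]
    rw [setIntegral_indicator (hsc.measurable measurableSet_ball)]
    have h4 : polarCoord.target ∩ T = Ioo 0 r ×ˢ Ioo (-π) π := by
      ext p
      simp only [hT, polarCoord_target, Set.mem_inter_iff, Set.mem_prod, Set.mem_preimage,
        mem_ball_zero_iff, Set.mem_Ioi, Set.mem_Ioo,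
        Complex.norm_polarCoord_symm]
      constructor
      · rintro ⟨⟨h5, h6⟩, h7⟩
        exact ⟨⟨h5, by rwa [abs_of_pos h5] at h7⟩, h6⟩
      · rintro ⟨⟨h5, h6⟩, h7⟩
        exact ⟨⟨h5, h7⟩, by rwa [abs_of_pos h5]⟩
    rw [h4]
    refine setIntegral_congr_fun (measurableSet_Ioo.prod measurableSet_Ioo) fun p _ => ?_
    rw [hsymm_circ]
  have inner : ∀ s : ℝ, ∫ θ in Ioo (-π) π, P (s, θ)
      = s * ∫ θ in (0:ℝ)..(2*π), ‖g (circleMap z s θ)‖ := by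
    intro s
    have hper : Function.Periodic (fun θ => ‖g (circleMap z s θ)‖) (2*π) := fun θ => by
      simp only []
      rw [periodic_circleMap z s θ]
    have h5 : ∫ θ in Ioo (-π) π, ‖g (circleMap z s θ)‖
        = ∫ θ in (0:ℝ)..(2*π), ‖g (circleMap z s θ)‖ := by
      rw [← MeasureTheory.integral_Ioc_eq_integral_Ioo,
        ← intervalIntegral.integral_of_le (by linarith [Real.pi_pos] : -π ≤ π)]
      have h6 := hper.intervalIntegral_add_eq (-π) 0
      simp only [zero_add] at h6
      rw [show -π + 2*π = π by ring] at h6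
      exact h6
    calc ∫ θ in Ioo (-π) π, P (s, θ)
        = ∫ θ in Ioo (-π) π, s * ‖g (circleMap z s θ)‖ := rfl
      _ = s * ∫ θ in Ioo (-π) π, ‖g (circleMap z s θ)‖ := integral_const_mul s _
      _ = _ := by rw [h5]
  simp only [IntegrableOn, Measure.volume_eq_prod, ← Measure.prod_restrict] at hPint
  have hFint : IntegrableOn (fun s => ∫ θ in Ioo (-π) π, P (s, θ)) (Ioo 0 r) :=
    hPint.integral_prod_left
  have hFint2 : IntegrableOn
      (fun s => s * ∫ θ in (0:ℝ)..(2*π), ‖g (circleMap z s θ)‖) (Ioo 0 r) :=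
    hFint.congr_fun (fun s _ => inner s) measurableSet_Ioo
  have hLint : IntegrableOn (fun s : ℝ => s * (2 * π * ‖g z‖)) (Ioo 0 r) :=
    ((continuous_id.mul continuous_const).integrableOn_Icc).mono_set Ioo_subset_Icc_self
  have hprodrw : ∫ p in Ioo 0 r ×ˢ Ioo (-π) π, P p
      = ∫ s in Ioo 0 r, ∫ θ in Ioo (-π) π, P (s, θ) := by
    rw [Measure.volume_eq_prod]
    exact setIntegral_prod P (by rwa [IntegrableOn, ← Measure.prod_restrict])
  calc π * r^2 * ‖g z‖ = ∫ s in Ioo 0 r, s * (2 * π * ‖g z‖) := by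
        have h7 : ∫ s in Ioo (0:ℝ) r, s = r^2/2 := by
          rw [← MeasureTheory.integral_Ioc_eq_integral_Ioo,
            ← intervalIntegral.integral_of_le hr.le, integral_id]
          norm_num
        rw [integral_mul_const, h7]; ring
    _ ≤ ∫ s in Ioo 0 r, s * ∫ θ in (0:ℝ)..(2*π), ‖g (circleMap z s θ)‖ := by
        refine setIntegral_mono_on hLint hFint2 measurableSet_Ioo fun s hs => ?_
        exact mul_le_mul_of_nonneg_left
          (circle_step hs.1 (hg.mono (closedBall_subset_closedBall hs.2.le))) hs.1.le
    _ = ∫ s in Ioo 0 r, ∫ θ in Ioo (-π) π, P (s, θ) :=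
        (setIntegral_congr_fun measurableSet_Ioo fun s _ => (inner s).symm)
    _ = ∫ p in Ioo 0 r ×ˢ Ioo (-π) π, P p := hprodrw.symm
    _ = ∫ w in ball z r, ‖g w‖ := Epolar.symm

lemma two_log_le (t : ℝ) (ht : 0 < t) : 2 * Real.log t ≤ t := by
  have h1 : Real.log (Real.sqrt t) ≤ Real.sqrt t - 1 :=
    Real.log_le_sub_one_of_pos (Real.sqrt_pos.2 ht)
  have h2 : Real.log (Real.sqrt t) = Real.log t / 2 := Real.log_sqrt ht.le
  have h3 : Real.sqrt t ^ 2 = t := Real.sq_sqrt ht.le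
  nlinarith [Real.sqrt_nonneg t, sq_nonneg (Real.sqrt t - 2)]

/-- If `f` is holomorphic on the upper half-plane `ℂ₊` with
`∫_{ℂ₊} |f| e^{−Im z} dλ < ∞`, then `ln|f(z)| ≤ Im z + 2 ln(1/Im z) + C` on `ℂ₊` for some
constant `C` depending on `f`. -/
theorem upper_half_plane_estimate (f : ℂ → ℂ)
    (hf : DifferentiableOn ℂ f {z : ℂ | 0 < z.im})
    (hint : IntegrableOn (fun z : ℂ => ‖f z‖ * Real.exp (-z.im)) {z : ℂ | 0 < z.im}) :
    ∃ C : ℝ, ∀ z : ℂ, 0 < z.im →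
      Real.log ‖f z‖ ≤ z.im + 2 * Real.log (1 / z.im) + C := by
  set g : ℂ → ℂ := fun w => f w * Complex.exp (Complex.I * w) with hgdef
  have hgd : DifferentiableOn ℂ g {z : ℂ | 0 < z.im} :=
    hf.mul ((Complex.differentiable_exp.comp
      ((differentiable_const _).mul differentiable_id)).differentiableOn)
  have hgnorm : ∀ w : ℂ, ‖g w‖ = ‖f w‖ * Real.exp (-w.im) := by
    intro w
    rw [hgdef]
    simp only [norm_mul, Complex.norm_exp]
    congr 2
    simp [Complex.mul_re]
  set M : ℝ := ∫ w in {z : ℂ | 0 < z.im}, ‖f w‖ * Real.exp (-w.im) with hM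
  have hM0 : 0 ≤ M :=
    setIntegral_nonneg (by
      simpa using measurableSet_lt measurable_const Complex.measurable_im)
      fun w _ => mul_nonneg (norm_nonneg _) (Real.exp_pos _).le
  set K : ℝ := 4 * M / π + 1 with hK
  have hK1 : 1 ≤ K := by
    have h0 : 0 ≤ 4 * M / π := div_nonneg (by linarith) Real.pi_pos.le
    rw [hK]; linarith
  refine ⟨Real.log K, fun z hz => ?_⟩
  set t : ℝ := z.im with ht
  -- the ball of radius t/2 around z is in the upper half plane
  have hsub : closedBall z (t/2) ⊆ {w : ℂ | 0 < w.im} := by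
    intro w hw
    have h1 : |(w - z).im| ≤ ‖w - z‖ := Complex.abs_im_le_norm (w - z)
    rw [mem_closedBall, dist_eq_norm] at hw
    have h2 : |w.im - z.im| ≤ t/2 := by
      rw [← Complex.sub_im]; exact h1.trans hw
    have := abs_le.1 h2
    simp only [Set.mem_setOf_eq]
    linarith [this.1]
  have hball := ball_mean_bound (by linarith : 0 < t/2) (hgd.mono hsub)
  -- bound the ball integral by M
  have hss : ball z (t/2) ⊆ {w : ℂ | 0 < w.im} := ball_subset_closedBall.trans hsub
  have hbnd : ∫ w in ball z (t/2), ‖g w‖ ≤ M := by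
    have h1 : ∫ w in ball z (t/2), ‖g w‖
        = ∫ w in ball z (t/2), ‖f w‖ * Real.exp (-w.im) := by
      simp only [hgnorm]
    rw [h1, hM]
    refine setIntegral_mono_set hint ?_ (HasSubset.Subset.eventuallyLE hss)
    exact Filter.Eventually.of_forall fun w =>
      mul_nonneg (norm_nonneg _) (Real.exp_pos _).le
  have hmain : π * (t/2)^2 * (‖f z‖ * Real.exp (-t)) ≤ M := by
    have := hball.trans hbnd
    rwa [hgnorm z] at this
  have htpos : 0 < t := hz
  -- conclude
  have hfz : ‖f z‖ ≤ K / t^2 * Real.exp t := by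
    have hpt : 0 < π * (t/2)^2 := by positivity
    have h2 : ‖f z‖ * Real.exp (-t) ≤ M / (π * (t/2)^2) :=
      (le_div_iff₀ hpt).2 (by rw [mul_comm]; exact hmain)
    have hq : M / (π * (t/2)^2) ≤ K / t^2 := by
      have : M / (π * (t/2)^2) = (4*M/π) / t^2 := by
        field_simp
        ring
      rw [this]
      gcongr
      rw [hK]; linarith
    have h3 : ‖f z‖ * Real.exp (-t) ≤ K / t^2 := h2.trans hq
    have h4 : ‖f z‖ = ‖f z‖ * Real.exp (-t) * Real.exp t := by
      rw [mul_assoc, ← Real.exp_add]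
      simp
    rw [h4]
    exact mul_le_mul_of_nonneg_right h3 (Real.exp_pos t).le
  have hlog1 : Real.log (1/t) = -Real.log t := by rw [one_div, Real.log_inv]
  have hKpos : (0:ℝ) < K := by linarith
  by_cases hfz0 : ‖f z‖ = 0
  · rw [hfz0, Real.log_zero, hlog1]
    have h1 := two_log_le t htpos
    have h2 : 0 ≤ Real.log K := Real.log_nonneg hK1
    linarith
  · have hpos : 0 < ‖f z‖ := (norm_nonneg _).lt_of_ne (Ne.symm hfz0)
    have h5 := Real.log_le_log hpos hfz
    have h6 : Real.log (K / t^2 * Real.exp t) = Real.log K - 2*Real.log t + t := by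
      rw [Real.log_mul (by positivity) (Real.exp_ne_zero t),
        Real.log_div hKpos.ne' (by positivity), Real.log_exp, Real.log_pow]
      push_cast
      ring
    rw [hlog1]
    rw [h6] at h5
    linarith
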